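/- There exist universal constants c, C > 0 such that for all integers m ≥ 2, n ≥ 1, and k with C · log₂(m) ≤ k ≤ m, there is a set 𝒜 of allocations of the m items to the n bidders with the following two properties: (1) the family {Aᵢ : A ∈ 𝒜, i ∈ [n]} of all sets that any bidder can possibly receive in 𝒜 has cardinality at most 2^{c·k}; and (2) for every profile of monotone valuations v₁,…,vₙ : 2^[m] → ℝ≥0, max_{A ∈ 𝒜} Σᵢ vᵢ(Aᵢ) ≥ (k/m) · max over all allocations A of Σᵢ vᵢ(Aᵢ). -/

import Mathlib

open Finset

attribute [local instance] Classical.propDecidable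

noncomputable def injEquiv {m : ℕ} (S : Finset (Fin m)) (Q : ℕ) :
    {f : Fin m → Fin Q // Set.InjOn f ↑S} ≃ ((↥S ↪ Fin Q) × (↥(Sᶜ) → Fin Q)) where
  toFun f := (⟨fun x => f.1 x.1, fun a b h => Subtype.ext (f.2 a.2 b.2 h)⟩, fun x => f.1 x.1)
  invFun p := ⟨fun x => if h : x ∈ S then p.1 ⟨x, h⟩ else p.2 ⟨x, by simpa using h⟩,
    by
      intro a ha b hb hab
      rw [Finset.mem_coe] at ha hb
      simp only [dif_pos ha, dif_pos hb] at hab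
      exact congrArg Subtype.val (p.1.injective hab)⟩
  left_inv f := by
    apply Subtype.ext
    funext x
    by_cases h : x ∈ S <;> simp [h] <;> rfl
  right_inv p := by
    refine Prod.ext (Function.Embedding.ext fun x => ?_) (funext fun x => ?_)
    · obtain ⟨x, hx⟩ := x; simp [hx]
    · obtain ⟨x, hx⟩ := x
      have : x ∉ S := by simpa using hx
      simp [this]

lemma card_injOn {m : ℕ} (S : Finset (Fin m)) (Q : ℕ) :
    Fintype.card {f : Fin m → Fin Q // Set.InjOn f ↑S}
      = Q.descFactorial S.card * Q ^ (m - S.card) := by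
  rw [Fintype.card_congr (injEquiv S Q), Fintype.card_prod, Fintype.card_embedding_eq,
    Fintype.card_fun, Fintype.card_coe, Fintype.card_coe, Fintype.card_fin,
    Finset.card_compl, Fintype.card_fin]

lemma descFactorial_ge {Q K s : ℕ} (hs : s ≤ K) : (Q - K) ^ s ≤ Q.descFactorial s := by
  induction s with
  | zero => simp
  | succ t ih =>
    rw [Nat.descFactorial_succ, pow_succ, mul_comm ((Q - K) ^ t) _]
    exact Nat.mul_le_mul (Nat.sub_le_sub_left (Nat.le_of_succ_le hs) Q)
      (ih (Nat.le_of_succ_le hs))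


lemma choose_le_pow_my (m j : ℕ) : m.choose j ≤ m ^ j := by
  induction j with
  | zero => simp
  | succ t ih =>
    have h1 : m.choose (t+1) ≤ m.choose (t+1) * (t+1) := Nat.le_mul_of_pos_right _ (Nat.succ_pos t)
    rw [Nat.choose_succ_right_eq] at h1
    calc m.choose (t+1) ≤ m.choose t * (m - t) := h1
      _ ≤ m ^ t * m := Nat.mul_le_mul ih (Nat.sub_le m t)
      _ = m ^ (t+1) := (pow_succ m t).symm

lemma card_small_sets {m K : ℕ} (hm : 1 ≤ m) :
    ((univ : Finset (Finset (Fin m))).filter (fun S => S.card ≤ K)).card ≤ (m+1) ^ (2*K) := by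
  have hsub : ((univ : Finset (Finset (Fin m))).filter (fun S => S.card ≤ K))
      ⊆ (range (K+1)).biUnion (fun j => powersetCard j univ) := by
    intro S hS
    rw [mem_filter] at hS
    exact mem_biUnion.mpr ⟨S.card, mem_range.mpr (Nat.lt_succ_of_le hS.2),
      mem_powersetCard_univ.mpr rfl⟩
  calc ((univ : Finset (Finset (Fin m))).filter (fun S => S.card ≤ K)).card
      ≤ ((range (K+1)).biUnion (fun j => powersetCard j univ)).card := card_le_card hsub
    _ ≤ ∑ j ∈ range (K+1), (powersetCard j (univ : Finset (Fin m))).card := card_biUnion_le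
    _ ≤ ∑ j ∈ range (K+1), m ^ K := by
        refine sum_le_sum fun j hj => ?_
        rw [card_powersetCard, card_univ, Fintype.card_fin]
        exact (choose_le_pow_my m j).trans (Nat.pow_le_pow_right hm (Nat.lt_succ_iff.mp (mem_range.mp hj)))
    _ = (K+1) * m ^ K := by rw [sum_const, card_range, smul_eq_mul]
    _ ≤ 2 ^ K * (m+1) ^ K := Nat.mul_le_mul (Nat.succ_le_of_lt (Nat.lt_two_pow_self (n := K)))
        (Nat.pow_le_pow_left (Nat.le_succ m) K)
    _ = (2*(m+1)) ^ K := (mul_pow 2 (m+1) K).symm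
    _ ≤ ((m+1)*(m+1)) ^ K := Nat.pow_le_pow_left (Nat.mul_le_mul_right _ (by omega)) K
    _ = (m+1) ^ (2*K) := by rw [two_mul, pow_add, mul_pow]

set_option maxHeartbeats 1000000 in
lemma hash_family_exists {m k : ℕ} (hm : 2 ≤ m) (hk : 1 ≤ k)
    (hlog : Real.logb 2 m ≤ (k : ℝ)) :
    ∃ H : Finset (Fin m → Fin (32*k)),
      H.card ≤ 2 ^ (16*k) ∧
      ∀ S : Finset (Fin m), S.card ≤ 8*k → ∃ h ∈ H, Set.InjOn h ↑S := by
  set Q := 32*k with hQ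
  set K := 8*k with hK
  set R := 2^(4*k)*(8*k+1)*(4*k) with hR
  set δ : ℝ := (3/4)^K with hδ
  have hδ0 : 0 < δ := by positivity
  have hδ1 : δ < 1 := pow_lt_one₀ (by norm_num) (by norm_num) (by omega)
  -- counting of "good" functions per small set
  have hgood : ∀ S : Finset (Fin m), S.card ≤ K →
      δ * (Q:ℝ)^m ≤ ((univ : Finset (Fin m → Fin Q)).filter
        (fun f => Set.InjOn f ↑S)).card := by
    intro S hS
    have h1 : ((univ : Finset (Fin m → Fin Q)).filter (fun f => Set.InjOn f ↑S)).card
        = Q.descFactorial S.card * Q ^ (m - S.card) := by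
      rw [← Fintype.card_subtype, card_injOn]
    rw [h1]
    have h2 : (Q - K)^S.card * Q^(m - S.card) ≤ Q.descFactorial S.card * Q^(m - S.card) :=
      Nat.mul_le_mul_right _ (descFactorial_ge hS)
    have hQK : Q - K = 24*k := by omega
    have hsm : S.card ≤ m := by
      simpa using card_le_card (subset_univ S)
    -- real computation
    have h3 : ((Q - K : ℕ):ℝ)^S.card * (Q:ℝ)^(m - S.card) ≥ δ * (Q:ℝ)^m := by
      rw [hQK]
      have hq : ((24*k : ℕ):ℝ) = (3/4) * ((Q:ℕ):ℝ) := by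
        push_cast [hQ]; ring
      rw [hq, mul_pow]
      have hsplit : ((Q:ℕ):ℝ)^S.card * ((Q:ℕ):ℝ)^(m - S.card) = ((Q:ℕ):ℝ)^m := by
        rw [← pow_add]
        congr 1
        omega
      calc δ * ((Q:ℕ):ℝ)^m ≤ (3/4)^S.card * ((Q:ℕ):ℝ)^m := by
            apply mul_le_mul_of_nonneg_right _ (by positivity)
            exact pow_le_pow_of_le_one (by norm_num) (by norm_num) hS
        _ = (3/4)^S.card * (((Q:ℕ):ℝ)^S.card * ((Q:ℕ):ℝ)^(m - S.card)) := by rw [hsplit]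
        _ = (3/4)^S.card * ((Q:ℕ):ℝ)^S.card * ((Q:ℕ):ℝ)^(m - S.card) := by ring
    calc δ * (Q:ℝ)^m ≤ ((Q - K : ℕ):ℝ)^S.card * (Q:ℝ)^(m - S.card) := h3
      _ = (((Q-K)^S.card * Q^(m - S.card) : ℕ) : ℝ) := by push_cast; ring
      _ ≤ (((Q.descFactorial S.card * Q^(m - S.card)) : ℕ) : ℝ) := by exact_mod_cast h2
  -- bad functions per small set
  have hbad : ∀ S : Finset (Fin m), S.card ≤ K →
      (((univ : Finset (Fin m → Fin Q)).filter (fun f => ¬ Set.InjOn f ↑S)).card : ℝ)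
        ≤ (1 - δ) * (Q:ℝ)^m := by
    intro S hS
    have hsplit := Finset.card_filter_add_card_filter_not
      (s := (univ : Finset (Fin m → Fin Q))) (p := fun f => Set.InjOn f ↑S)
    have hcu : (univ : Finset (Fin m → Fin Q)).card = Q^m := by
      rw [card_univ, Fintype.card_fun, Fintype.card_fin, Fintype.card_fin]
    have := hgood S hS
    have hb : (((univ : Finset (Fin m → Fin Q)).filter (fun f => ¬ Set.InjOn f ↑S)).card : ℝ)
        = (Q:ℝ)^m - (((univ : Finset (Fin m → Fin Q)).filter (fun f => Set.InjOn f ↑S)).card : ℝ) := by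
      have : (((univ : Finset (Fin m → Fin Q)).filter (fun f => Set.InjOn f ↑S)).card : ℝ)
          + (((univ : Finset (Fin m → Fin Q)).filter (fun f => ¬ Set.InjOn f ↑S)).card : ℝ)
          = (Q:ℝ)^m := by
        rw [← Nat.cast_add]
        rw [hsplit, hcu]
        push_cast; ring
      linarith
    rw [hb]
    linarith [hgood S hS]

  -- analytic inequality
  have hk1 : (1:ℝ) ≤ (k:ℝ) := by exact_mod_cast hk
  have hδR : ((8*k+1)*(4*k) : ℝ) ≤ δ * (R:ℝ) := by
    have hbase : ((3/4:ℝ))^(8*k) * 2^(4*k) = ((3/4:ℝ)^8 * 2^4)^k := by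
      rw [pow_mul, pow_mul, ← mul_pow]
    have h1 : (1:ℝ) ≤ (3/4:ℝ)^(8*k) * 2^(4*k) := by
      rw [hbase]
      apply one_le_pow₀
      norm_num
    have hRcast : (R:ℝ) = 2^(4*k)*(8*k+1)*(4*k) := by
      rw [hR]; push_cast; ring
    have : δ * (R:ℝ) = ((3/4:ℝ)^(8*k) * 2^(4*k)) * ((8*k+1)*(4*k)) := by
      rw [hδ, hK, hRcast]; ring
    rw [this]
    have hnn : (0:ℝ) ≤ (8*(k:ℝ)+1)*(4*(k:ℝ)) := by positivity
    exact le_mul_of_one_le_left hnn h1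
  have hlog2pos : (0:ℝ) < Real.log 2 := Real.log_pos (by norm_num)
  have hmpos : (0:ℝ) < (m:ℝ) := by positivity
  have hm1 : (2:ℝ) ≤ (m:ℝ) := by exact_mod_cast hm
  have hlogm : Real.log m ≤ (k:ℝ) * Real.log 2 := by
    rw [Real.logb, div_le_iff₀ hlog2pos] at hlog
    exact hlog
  have hlogm1 : Real.log ((m:ℝ)+1) ≤ 2 * ((k:ℝ) * Real.log 2) := by
    have h1 : ((m:ℝ)+1) ≤ (m:ℝ)*(m:ℝ) := by nlinarith
    have h2 : Real.log ((m:ℝ)+1) ≤ Real.log ((m:ℝ)*(m:ℝ)) :=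
      Real.log_le_log (by positivity) h1
    rw [Real.log_mul (by positivity) (by positivity)] at h2
    linarith
  have hlogm1nonneg : 0 ≤ Real.log ((m:ℝ)+1) := Real.log_nonneg (by linarith)
  have hexp : (2*K : ℝ) * Real.log ((m:ℝ)+1) < δ * (R:ℝ) := by
    have hlt : Real.log 2 < 0.6931471808 := Real.log_two_lt_d9
    have h2K : (2*K:ℝ) = 16*(k:ℝ) := by rw [hK]; push_cast; ring
    rw [h2K]
    have hup : 16*(k:ℝ) * Real.log ((m:ℝ)+1) ≤ 16*(k:ℝ) * (2*((k:ℝ)*Real.log 2)) := by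
      apply mul_le_mul_of_nonneg_left hlogm1 (by positivity)
    have hlow : ((8*k+1)*(4*k) : ℝ) = 32*(k:ℝ)^2 + 4*(k:ℝ) := by push_cast; ring
    nlinarith [hδR, hlow, hup, hk1, hlt, hlog2pos]
  have hanal : ((m:ℝ)+1)^(2*K) * (1-δ)^R < 1 := by
    have hml : ((m:ℝ)+1)^(2*K) = Real.exp ((2*K : ℝ) * Real.log ((m:ℝ)+1)) := by
      have hh := Real.exp_nat_mul (Real.log ((m:ℝ)+1)) (2*K)
      rw [Real.exp_log (by linarith)] at hh
      rw [← hh]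
      norm_cast
    have h1δ : (1-δ) ≤ Real.exp (-δ) := by
      have := Real.add_one_le_exp (-δ)
      linarith
    have h2 : (1-δ)^R ≤ Real.exp (-δ)^R := pow_le_pow_left₀ (by linarith) h1δ R
    have h3 : Real.exp (-δ)^R = Real.exp ((R:ℝ) * (-δ)) := (Real.exp_nat_mul _ R).symm
    calc ((m:ℝ)+1)^(2*K) * (1-δ)^R
        ≤ ((m:ℝ)+1)^(2*K) * Real.exp ((R:ℝ) * (-δ)) := by
          rw [← h3]
          apply mul_le_mul_of_nonneg_left h2 (by positivity)
      _ = Real.exp ((2*K:ℝ) * Real.log ((m:ℝ)+1) + (R:ℝ) * (-δ)) := by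
          rw [hml, ← Real.exp_add]
      _ < Real.exp 0 := by
          apply Real.exp_lt_exp.mpr
          nlinarith [hexp]
      _ = 1 := Real.exp_zero
  -- double counting
  have hQm_pos : 0 < Q^m := Nat.pow_pos (by omega)
  have hcount : ∃ t : Fin R → (Fin m → Fin Q), ∀ S : Finset (Fin m), S.card ≤ K →
      ∃ r, Set.InjOn (t r) ↑S := by
    by_contra hcon
    push_neg at hcon
    set 𝒮 : Finset (Finset (Fin m)) := univ.filter (fun S => S.card ≤ K) with h𝒮
    have hlb : ((Q^m)^R : ℕ) ≤ ∑ t : Fin R → (Fin m → Fin Q),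
        (𝒮.filter (fun S : Finset (Fin m) => ∀ r, ¬ Set.InjOn (t r) ↑S)).card := by
      have : ∀ t : Fin R → (Fin m → Fin Q),
          1 ≤ (𝒮.filter (fun S : Finset (Fin m) => ∀ r, ¬ Set.InjOn (t r) ↑S)).card := by
        intro t
        obtain ⟨S, hS1, hS2⟩ := hcon t
        apply card_pos.mpr
        refine ⟨S, ?_⟩
        rw [h𝒮, mem_filter, mem_filter]
        exact ⟨⟨mem_univ S, hS1⟩, hS2⟩
      calc ((Q^m)^R : ℕ) = ∑ _t : Fin R → (Fin m → Fin Q), 1 := by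
            rw [sum_const, card_univ, smul_eq_mul, mul_one]
            congr 1
            rw [Fintype.card_fun, Fintype.card_fun, Fintype.card_fin, Fintype.card_fin,
              Fintype.card_fin]
        _ ≤ _ := sum_le_sum (fun t _ => this t)
    have hswap : ∑ t : Fin R → (Fin m → Fin Q),
        (𝒮.filter (fun S : Finset (Fin m) => ∀ r, ¬ Set.InjOn (t r) ↑S)).card
        = ∑ S ∈ 𝒮, ((univ : Finset (Fin m → Fin Q)).filter
            (fun f => ¬ Set.InjOn f ↑S)).card ^ R := by
      have h1 : ∀ t : Fin R → (Fin m → Fin Q),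
          (𝒮.filter (fun S : Finset (Fin m) => ∀ r, ¬ Set.InjOn (t r) ↑S)).card
          = ∑ S ∈ 𝒮, if (∀ r, ¬ Set.InjOn (t r) ↑S) then 1 else 0 := fun t =>
        card_filter (fun S : Finset (Fin m) => ∀ r, ¬ Set.InjOn (t r) ↑S) 𝒮
      rw [Finset.sum_congr rfl (fun t _ => h1 t), Finset.sum_comm]
      refine Finset.sum_congr rfl (fun S _ => ?_)
      rw [Finset.sum_boole]
      have hpi : (univ : Finset (Fin R → (Fin m → Fin Q))).filter
            (fun t => ∀ r, ¬ Set.InjOn (t r) ↑S)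
          = Fintype.piFinset (fun _ : Fin R =>
              (univ : Finset (Fin m → Fin Q)).filter (fun f => ¬ Set.InjOn f ↑S)) := by
        ext t
        simp [Fintype.mem_piFinset]
      rw [hpi, Fintype.card_piFinset]
      simp [prod_const]
    -- now compare in ℝ
    have hreal : (((Q^m)^R : ℕ) : ℝ) < (((Q^m)^R : ℕ) : ℝ) := by
      have hQmR : (((Q^m)^R : ℕ) : ℝ) = ((Q:ℝ)^m)^R := by push_cast; ring
      calc (((Q^m)^R : ℕ) : ℝ)
          ≤ ((∑ S ∈ 𝒮, ((univ : Finset (Fin m → Fin Q)).filter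
              (fun f => ¬ Set.InjOn f ↑S)).card ^ R : ℕ) : ℝ) := by
            exact_mod_cast hlb.trans_eq hswap
        _ = ∑ S ∈ 𝒮, (((univ : Finset (Fin m → Fin Q)).filter
              (fun f => ¬ Set.InjOn f ↑S)).card : ℝ) ^ R := by push_cast; ring
        _ ≤ ∑ S ∈ 𝒮, ((1-δ) * (Q:ℝ)^m)^R := by
            refine sum_le_sum (fun S hS => ?_)
            have hSK : S.card ≤ K := (mem_filter.mp hS).2
            exact pow_le_pow_left₀ (by positivity) (hbad S hSK) R
        _ = (𝒮.card : ℝ) * ((1-δ) * (Q:ℝ)^m)^R := by rw [sum_const, nsmul_eq_mul]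
        _ ≤ ((m:ℝ)+1)^(2*K) * ((1-δ) * (Q:ℝ)^m)^R := by
            refine mul_le_mul_of_nonneg_right ?_
              (pow_nonneg (mul_nonneg (by linarith) (by positivity)) R)
            have hm1n : 1 ≤ m := le_trans one_le_two hm
            have hcss := @card_small_sets m K hm1n
            calc (𝒮.card : ℝ) ≤ (((m+1)^(2*K) : ℕ) : ℝ) := by exact_mod_cast hcss
              _ = ((m:ℝ)+1)^(2*K) := by push_cast; ring
        _ = (((m:ℝ)+1)^(2*K) * (1-δ)^R) * ((Q:ℝ)^m)^R := by rw [mul_pow]; ring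
        _ < 1 * ((Q:ℝ)^m)^R := by
            apply mul_lt_mul_of_pos_right hanal (by positivity)
        _ = (((Q^m)^R : ℕ) : ℝ) := by rw [one_mul, hQmR]
    exact absurd hreal (lt_irrefl _)
  obtain ⟨t, ht⟩ := hcount
  refine ⟨(univ : Finset (Fin R)).image t, ?_, ?_⟩
  · calc ((univ : Finset (Fin R)).image t).card ≤ (univ : Finset (Fin R)).card :=
        card_image_le
      _ = R := by rw [card_univ, Fintype.card_fin]
      _ ≤ 2^(16*k) := by
        rw [hR]
        calc 2^(4*k)*(8*k+1)*(4*k) ≤ 2^(4*k)*2^(8*k)*2^(4*k) := by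
              apply Nat.mul_le_mul (Nat.mul_le_mul_left _ _) _
              · exact Nat.succ_le_of_lt (Nat.lt_two_pow_self)
              · exact le_of_lt (Nat.lt_of_le_of_lt (by omega) (Nat.lt_two_pow_self (n := 4*k)))
          _ = 2^(16*k) := by rw [← pow_add, ← pow_add]; congr 1; ring
  · intro S hS
    obtain ⟨r, hr⟩ := ht S hS
    exact ⟨t r, mem_image_of_mem t (mem_univ r), hr⟩

set_option maxHeartbeats 1000000 in
/-- there are universal constants `c, C > 0` such that for every `m ≥ 2`, `n ≥ 1`,
and `C·log₂ m ≤ k ≤ m`, there is a bank `𝒜` of allocations in which at most `2^(c·k)` distinct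
sets can ever be received by a bidder, and whose welfare-maximal element is an
`m/k`-approximation to the optimal welfare, for all monotone nonnegative valuations. -/
theorem general_mechanism_exists :
    ∃ c C : ℝ, 0 < c ∧ 0 < C ∧
      ∀ m n k : ℕ, 2 ≤ m → 1 ≤ n → C * Real.logb 2 m ≤ (k : ℝ) → k ≤ m →
        ∃ 𝒜 : Set (Fin n → Finset (Fin m)),
          (∀ A ∈ 𝒜, ∀ i j : Fin n, i ≠ j → Disjoint (A i) (A j)) ∧
          ((({S : Finset (Fin m) | ∃ A ∈ 𝒜, ∃ i : Fin n, A i = S}).ncard : ℝ)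
              ≤ (2 : ℝ) ^ (c * (k : ℝ))) ∧
          (∀ v : Fin n → Finset (Fin m) → ℝ,
            (∀ i S, 0 ≤ v i S) →
            (∀ i, ∀ S T : Finset (Fin m), S ⊆ T → v i S ≤ v i T) →
            ∀ A' : Fin n → Finset (Fin m),
              (∀ i j : Fin n, i ≠ j → Disjoint (A' i) (A' j)) →
              ∃ A ∈ 𝒜, (k : ℝ) / m * ∑ i, v i (A' i) ≤ ∑ i, v i (A i)) := by
  refine ⟨100, 1, by norm_num, by norm_num, ?_⟩
  intro m n k hm hn hlogk hkm
  rw [one_mul] at hlogk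
  have hmR : (2:ℝ) ≤ (m:ℝ) := by exact_mod_cast hm
  have hlogb1 : (1:ℝ) ≤ Real.logb 2 m := by
    rw [← Real.logb_self_eq_one (b := 2) (by norm_num)]
    exact Real.logb_le_logb_of_le (by norm_num) (by norm_num) hmR
  have hk1 : 1 ≤ k := by exact_mod_cast hlogb1.trans hlogk
  have hrpow : (2:ℝ) ^ ((100:ℝ) * (k:ℝ)) = ((2:ℝ)) ^ (100*k : ℕ) := by
    rw [← Real.rpow_natCast 2 (100*k)]
    congr 1
    push_cast
    ring
  have hpow48 : 1 ≤ 48*k := by omega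
  have hpow100 : 48*k+1 ≤ 100*k := by omega
  by_cases hcase : m < 2*k
  · -- trivial case : all allocations
    have hm100 : m ≤ 100*k := by omega
    refine ⟨{A | ∀ i j, i ≠ j → Disjoint (A i) (A j)}, fun A hA => hA, ?_, ?_⟩
    · have h1 : ({S : Finset (Fin m) | ∃ A ∈ {A : Fin n → Finset (Fin m) |
          ∀ i j, i ≠ j → Disjoint (A i) (A j)}, ∃ i : Fin n, A i = S}).ncard
          ≤ (Set.univ : Set (Finset (Fin m))).ncard :=
        Set.ncard_le_ncard (Set.subset_univ _) Set.finite_univ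
      rw [Set.ncard_univ, Nat.card_eq_fintype_card, Fintype.card_finset, Fintype.card_fin] at h1
      have h2 : (2:ℕ)^m ≤ 2^(100*k) := Nat.pow_le_pow_right (by norm_num) hm100
      calc (({S : Finset (Fin m) | ∃ A ∈ {A : Fin n → Finset (Fin m) |
            ∀ i j, i ≠ j → Disjoint (A i) (A j)}, ∃ i : Fin n, A i = S}).ncard : ℝ)
          ≤ ((2^m : ℕ) : ℝ) := by exact_mod_cast h1
        _ ≤ ((2^(100*k) : ℕ) : ℝ) := by exact_mod_cast h2
        _ = (2:ℝ) ^ ((100:ℝ) * (k:ℝ)) := by rw [hrpow]; push_cast; ring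
    · intro v hv0 hmono A' hdisj
      refine ⟨A', hdisj, ?_⟩
      have hs : 0 ≤ ∑ i, v i (A' i) := sum_nonneg (fun i _ => hv0 i _)
      have hkm' : (k:ℝ)/m ≤ 1 := by
        rw [div_le_one (by positivity)]
        exact_mod_cast hkm
      nlinarith
  · -- main case
    push_neg at hcase
    obtain ⟨H, hHcard, hHsep⟩ := hash_family_exists hm hk1 hlogk
    set Fam : Finset (Finset (Fin m)) := insert ∅ (insert Finset.univ
      ((H ×ˢ (Finset.univ : Finset (Finset (Fin (32*k))))).image
        (fun p => Finset.univ.filter (fun x => p.1 x ∈ p.2)))) with hFam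
    refine ⟨{A | (∀ i j, i ≠ j → Disjoint (A i) (A j)) ∧ ∀ i, A i ∈ Fam},
      fun A hA => hA.1, ?_, ?_⟩
    · -- cardinality bound
      have hsub : {S : Finset (Fin m) | ∃ A ∈ {A : Fin n → Finset (Fin m) |
          (∀ i j, i ≠ j → Disjoint (A i) (A j)) ∧ ∀ i, A i ∈ Fam}, ∃ i : Fin n, A i = S}
          ⊆ ↑Fam := by
        rintro S ⟨A, hA, i, rfl⟩
        exact hA.2 i
      have h1 := (Set.ncard_le_ncard hsub (Fam.finite_toSet)).trans_eq
        (Set.ncard_coe_finset Fam)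
      have hFamcard : Fam.card ≤ 2^(100*k) := by
        have hprod : (H ×ˢ (Finset.univ : Finset (Finset (Fin (32*k))))).card
            = H.card * 2^(32*k) := by
          rw [card_product, card_univ, Fintype.card_finset, Fintype.card_fin]
        have hc2 : H.card * 2^(32*k) ≤ 2^(16*k) * 2^(32*k) :=
          Nat.mul_le_mul_right _ hHcard
        have hc3 : (2:ℕ)^(16*k) * 2^(32*k) = 2^(48*k) := by
          rw [← pow_add]
          congr 1
          ring
        have h48 : (2:ℕ) ≤ 2^(48*k) := by
          calc (2:ℕ) = 2^1 := (pow_one 2).symm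
            _ ≤ 2^(48*k) := Nat.pow_le_pow_right (by norm_num) hpow48
        have hc5 : (2:ℕ)^(48*k) + 2^(48*k) = 2^(48*k+1) := by
          rw [pow_succ]
          ring
        have hc6 : (2:ℕ)^(48*k+1) ≤ 2^(100*k) := Nat.pow_le_pow_right (by norm_num) hpow100
        calc Fam.card
            ≤ (insert Finset.univ
                ((H ×ˢ (Finset.univ : Finset (Finset (Fin (32*k))))).image
                  (fun p => Finset.univ.filter (fun x => p.1 x ∈ p.2)))).card + 1 :=
              card_insert_le _ _
          _ ≤ (((H ×ˢ (Finset.univ : Finset (Finset (Fin (32*k))))).image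
                  (fun p => Finset.univ.filter (fun x => p.1 x ∈ p.2))).card + 1) + 1 :=
              Nat.add_le_add_right (card_insert_le _ _) 1
          _ ≤ ((H ×ˢ (Finset.univ : Finset (Finset (Fin (32*k))))).card + 1) + 1 :=
              Nat.add_le_add_right (Nat.add_le_add_right card_image_le 1) 1
          _ = H.card * 2^(32*k) + 2 := by rw [hprod]
          _ ≤ 2^(16*k) * 2^(32*k) + 2 := Nat.add_le_add_right hc2 2
          _ = 2^(48*k) + 2 := by rw [hc3]
          _ ≤ 2^(48*k) + 2^(48*k) := Nat.add_le_add_left h48 _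
          _ = 2^(48*k+1) := hc5
          _ ≤ 2^(100*k) := hc6
      calc (({S : Finset (Fin m) | ∃ A ∈ {A : Fin n → Finset (Fin m) |
            (∀ i j, i ≠ j → Disjoint (A i) (A j)) ∧ ∀ i, A i ∈ Fam}, ∃ i : Fin n, A i = S}).ncard : ℝ)
          ≤ (Fam.card : ℝ) := by exact_mod_cast h1
        _ ≤ ((2^(100*k) : ℕ) : ℝ) := by exact_mod_cast hFamcard
        _ = (2:ℝ) ^ ((100:ℝ) * (k:ℝ)) := by rw [hrpow]; push_cast; ring
    · -- welfare guarantee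
      intro v hv0 hmono A' hdisj
      set s : Fin n → ℕ := fun i => (A' i).card with hsdef
      have hsum_s : ∑ i, s i ≤ m := by
        calc ∑ i, s i = ((univ : Finset (Fin n)).biUnion A').card :=
            (card_biUnion (fun i _ j _ hij => hdisj i j hij)).symm
          _ ≤ (univ : Finset (Fin m)).card := card_le_card (subset_univ _)
          _ = m := by rw [card_univ, Fintype.card_fin]
      set SMALL : Finset (Fin n) := univ.filter (fun i => s i ≤ 4*k) with hSMALL
      set BIG : Finset (Fin n) := univ.filter (fun i => ¬ (s i ≤ 4*k)) with hBIGdef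
      set P : Fin n → ℕ := fun i => ∑ j ∈ SMALL.filter (fun j => j < i), s j with hP
      set grp : Fin n → ℕ := fun i => P i / (4*k) with hgrpdef
      set G : ℕ := m/(4*k) + 1 with hG
      have hk0 : 0 < 4*k := by positivity
      -- prefix sums are compatible
      have hPle : ∀ i j : Fin n, i ∈ SMALL → i < j → P i + s i ≤ P j := by
        intro i j hiS hij
        have hins : insert i (SMALL.filter (fun l => l < i)) ⊆ SMALL.filter (fun l => l < j) := by
          intro l hl
          rcases mem_insert.mp hl with rfl | hl2
          · exact mem_filter.mpr ⟨hiS, hij⟩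
          · obtain ⟨hl3, hl4⟩ := mem_filter.mp hl2
            exact mem_filter.mpr ⟨hl3, lt_trans hl4 hij⟩
        have hnotmem : i ∉ SMALL.filter (fun l => l < i) := by
          simp [lt_irrefl]
        calc P i + s i = s i + P i := by ring
          _ = ∑ l ∈ insert i (SMALL.filter (fun l => l < i)), s l := (sum_insert hnotmem).symm
          _ ≤ P j := sum_le_sum_of_subset hins
      have hPm : ∀ i : Fin n, P i ≤ m := by
        intro i
        calc P i ≤ ∑ j, s j := sum_le_sum_of_subset (subset_univ _)
          _ ≤ m := hsum_s
      -- mass of each group is at most 8k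
      have hmass : ∀ g : ℕ, ∑ i ∈ SMALL.filter (fun i => grp i = g), s i ≤ 8*k := by
        intro g
        have hIco : ∀ i ∈ SMALL.filter (fun i => grp i = g),
            Finset.Ico (P i) (P i + s i) ⊆ Finset.Ico (4*k*g) (4*k*g + 8*k) := by
          intro i hi
          obtain ⟨hiS, hig⟩ := mem_filter.mp hi
          have h1 : 4*k*g ≤ P i := by
            have h0 : grp i * (4*k) ≤ P i := Nat.div_mul_le_self (P i) (4*k)
            rw [hig] at h0
            calc 4*k*g = g * (4*k) := by ring
              _ ≤ P i := h0
          have h2 : P i < 4*k*g + 4*k := by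
            have hgl : grp i < g + 1 := by
              rw [hig]
              exact Nat.lt_succ_self g
            calc P i < (g+1)*(4*k) := (Nat.div_lt_iff_lt_mul hk0).mp hgl
              _ = 4*k*g + 4*k := by ring
          have h3 : s i ≤ 4*k := by
            have := (mem_filter.mp hiS).2
            exact this
          intro x hx
          rw [Finset.mem_Ico] at hx ⊢
          revert h1 h2 h3 hx
          generalize P i = a
          generalize s i = b
          intro h1 h2 h3 hx
          omega
        have hIdisj : ∀ i ∈ SMALL.filter (fun i => grp i = g),
            ∀ j ∈ SMALL.filter (fun i => grp i = g), i ≠ j →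
            Disjoint (Finset.Ico (P i) (P i + s i)) (Finset.Ico (P j) (P j + s j)) := by
          have key : ∀ i j : Fin n, i ∈ SMALL → i < j →
              Disjoint (Finset.Ico (P i) (P i + s i)) (Finset.Ico (P j) (P j + s j)) := by
            intro i j hiS hij
            have h := hPle i j hiS hij
            refine Finset.disjoint_left.mpr (fun x hx hx' => ?_)
            rw [Finset.mem_Ico] at hx hx'
            revert h hx hx'
            generalize P i = a
            generalize s i = b
            generalize P j = c
            generalize s j = d
            intro h hx hx'
            omega
          intro i hi j hj hij
          rcases Ne.lt_or_gt hij with h | h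
          · exact key i j (mem_filter.mp hi).1 h
          · exact (key j i (mem_filter.mp hj).1 h).symm
        calc ∑ i ∈ SMALL.filter (fun i => grp i = g), s i
            = ∑ i ∈ SMALL.filter (fun i => grp i = g), (Finset.Ico (P i) (P i + s i)).card := by
              refine sum_congr rfl (fun i _ => ?_)
              rw [Nat.card_Ico]
              exact (Nat.add_sub_cancel_left (P i) (s i)).symm
          _ = ((SMALL.filter (fun i => grp i = g)).biUnion
                (fun i => Finset.Ico (P i) (P i + s i))).card := (card_biUnion hIdisj).symm
          _ ≤ (Finset.Ico (4*k*g) (4*k*g + 8*k)).card := by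
              refine card_le_card (fun x hx => ?_)
              obtain ⟨i, hi, hxi⟩ := mem_biUnion.mp hx
              exact hIco i hi hxi
          _ = 8*k := by
              rw [Nat.card_Ico]
              omega
      -- union of each group has at most 8k elements
      have hTg : ∀ g : ℕ, ((SMALL.filter (fun i => grp i = g)).biUnion A').card ≤ 8*k := by
        intro g
        calc ((SMALL.filter (fun i => grp i = g)).biUnion A').card
            = ∑ i ∈ SMALL.filter (fun i => grp i = g), s i :=
            card_biUnion (fun i _ j _ hij => hdisj i j hij)
          _ ≤ 8*k := hmass g
      -- choose a separating hash for each group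
      choose hfn hfnmem hfninj using fun g : ℕ =>
        hHsep ((SMALL.filter (fun i => grp i = g)).biUnion A') (hTg g)
      -- the allocations
      set Abig : Fin n → Fin n → Finset (Fin m) :=
        fun i j => if j = i then Finset.univ else ∅ with hAbig
      set Agrp : ℕ → Fin n → Finset (Fin m) := fun g i =>
        if i ∈ SMALL.filter (fun i => grp i = g) then
          Finset.univ.filter (fun x => hfn g x ∈ (A' i).image (hfn g)) else ∅ with hAgrp
      have hemptyFam : (∅ : Finset (Fin m)) ∈ Fam := by
        rw [hFam]
        exact mem_insert_self _ _
      have hunivFam : (Finset.univ : Finset (Fin m)) ∈ Fam := by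
        rw [hFam]
        exact mem_insert_of_mem (mem_insert_self _ _)
      have hAbigmem : ∀ i, Abig i ∈ {A : Fin n → Finset (Fin m) |
          (∀ a b, a ≠ b → Disjoint (A a) (A b)) ∧ ∀ a, A a ∈ Fam} := by
        intro i
        constructor
        · intro a b hab
          simp only [hAbig]
          by_cases ha : a = i
          · have hb : ¬ (b = i) := fun hbi => hab (by rw [ha, hbi])
            rw [if_pos ha, if_neg hb]
            exact disjoint_bot_right
          · rw [if_neg ha]
            exact disjoint_bot_left
        · intro j
          simp only [hAbig]
          by_cases hj : j = i
          · rw [if_pos hj]; exact hunivFam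
          · rw [if_neg hj]; exact hemptyFam
      have hAgrpmem : ∀ g : ℕ, Agrp g ∈ {A : Fin n → Finset (Fin m) |
          (∀ a b, a ≠ b → Disjoint (A a) (A b)) ∧ ∀ a, A a ∈ Fam} := by
        intro g
        constructor
        · intro a b hab
          simp only [hAgrp]
          by_cases ha : a ∈ SMALL.filter (fun i => grp i = g)
          · by_cases hb : b ∈ SMALL.filter (fun i => grp i = g)
            · rw [if_pos ha, if_pos hb]
              refine Finset.disjoint_left.mpr (fun x hx hx' => ?_)
              rw [mem_filter] at hx hx'
              obtain ⟨-, hx2⟩ := hx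
              obtain ⟨-, hx2'⟩ := hx'
              obtain ⟨u, hu, hueq⟩ := mem_image.mp hx2
              obtain ⟨w, hw, hweq⟩ := mem_image.mp hx2'
              have huT : u ∈ (SMALL.filter (fun i => grp i = g)).biUnion A' :=
                mem_biUnion.mpr ⟨a, ha, hu⟩
              have hwT : w ∈ (SMALL.filter (fun i => grp i = g)).biUnion A' :=
                mem_biUnion.mpr ⟨b, hb, hw⟩
              have huw : u = w := by
                apply hfninj g (Finset.mem_coe.mpr huT) (Finset.mem_coe.mpr hwT)
                rw [hueq, hweq]
              rw [huw] at hu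
              exact Finset.disjoint_left.mp (hdisj a b hab) hu hw
            · rw [if_neg hb]
              exact disjoint_bot_right
          · rw [if_neg ha]
            exact disjoint_bot_left
        · intro i
          simp only [hAgrp]
          by_cases hi : i ∈ SMALL.filter (fun i => grp i = g)
          · rw [if_pos hi, hFam]
            apply mem_insert_of_mem
            apply mem_insert_of_mem
            apply mem_image.mpr
            exact ⟨(hfn g, (A' i).image (hfn g)),
              mem_product.mpr ⟨hfnmem g, mem_univ _⟩, rfl⟩
          · rw [if_neg hi]
            exact hemptyFam
      -- superset property for members
      have hsupset : ∀ g : ℕ, ∀ i ∈ SMALL.filter (fun i => grp i = g), A' i ⊆ Agrp g i := by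
        intro g i hi x hx
        simp only [hAgrp]
        rw [if_pos hi, mem_filter]
        exact ⟨mem_univ x, mem_image_of_mem _ hx⟩
      -- the sum bound
      have hgrprange : ∀ i ∈ SMALL, grp i ∈ Finset.range G := by
        intro i _
        have hdd : P i / (4*k) ≤ m / (4*k) := Nat.div_le_div_right (hPm i)
        exact mem_range.mpr (Nat.lt_succ_of_le hdd)
      have hsplit0 : ∑ i, v i (A' i)
          = ∑ i ∈ SMALL, v i (A' i) + ∑ i ∈ BIG, v i (A' i) := by
        rw [hSMALL, hBIGdef]
        exact (sum_filter_add_sum_filter_not univ (fun i => s i ≤ 4*k) _).symm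
      have hsmallsplit : ∑ i ∈ SMALL, v i (A' i)
          = ∑ g ∈ Finset.range G, ∑ i ∈ SMALL.filter (fun i => grp i = g), v i (A' i) :=
        (sum_fiberwise_of_maps_to hgrprange _).symm
      have hbigterm : ∀ i ∈ BIG, v i (A' i) ≤ ∑ j, v j (Abig i j) := by
        intro i _
        have h1 : v i (A' i) ≤ v i (Abig i i) := by
          have hAii : Abig i i = Finset.univ := by
            simp [hAbig]
          rw [hAii]
          exact hmono i _ _ (subset_univ _)
        exact h1.trans (single_le_sum (fun j _ => hv0 j _) (mem_univ i))
      have hgrpterm : ∀ g ∈ Finset.range G,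
          ∑ i ∈ SMALL.filter (fun i => grp i = g), v i (A' i) ≤ ∑ j, v j (Agrp g j) := by
        intro g _
        calc ∑ i ∈ SMALL.filter (fun i => grp i = g), v i (A' i)
            ≤ ∑ i ∈ SMALL.filter (fun i => grp i = g), v i (Agrp g i) :=
            sum_le_sum (fun i hi => hmono i _ _ (hsupset g i hi))
          _ ≤ ∑ j, v j (Agrp g j) :=
            sum_le_sum_of_subset_of_nonneg (subset_univ _) (fun j _ _ => hv0 j _)
      -- index set
      set J : Finset (Fin n ⊕ ℕ) :=
        BIG.map ⟨Sum.inl, Sum.inl_injective⟩ ∪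
          (Finset.range G).map ⟨Sum.inr, Sum.inr_injective⟩ with hJ
      set Ψ : Fin n ⊕ ℕ → (Fin n → Finset (Fin m)) := Sum.elim Abig Agrp with hΨ
      have hJdisj : Disjoint (BIG.map ⟨Sum.inl, Sum.inl_injective⟩)
          ((Finset.range G).map ⟨Sum.inr, Sum.inr_injective⟩) := by
        refine Finset.disjoint_left.mpr (fun x hx hx' => ?_)
        obtain ⟨a, -, rfl⟩ := mem_map.mp hx
        obtain ⟨b, -, hb⟩ := mem_map.mp hx'
        exact Sum.inr_ne_inl hb
      have hJsum : ∑ i, v i (A' i) ≤ ∑ u ∈ J, ∑ j, v j (Ψ u j) := by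
        rw [hJ, sum_union hJdisj, sum_map, sum_map]
        simp only [Function.Embedding.coeFn_mk, hΨ, Sum.elim_inl, Sum.elim_inr]
        rw [hsplit0, hsmallsplit]
        have h1 : ∑ i ∈ BIG, v i (A' i) ≤ ∑ i ∈ BIG, ∑ j, v j (Abig i j) :=
          sum_le_sum hbigterm
        have h2 : ∑ g ∈ Finset.range G, ∑ i ∈ SMALL.filter (fun i => grp i = g), v i (A' i)
            ≤ ∑ g ∈ Finset.range G, ∑ j, v j (Agrp g j) := sum_le_sum hgrpterm
        linarith
      -- J is small : J.card * k ≤ m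
      have hBIGcard : BIG.card * (4*k+1) ≤ m := by
        have h1 : ∀ i ∈ BIG, 4*k+1 ≤ s i := by
          intro i hi
          have h := (mem_filter.mp hi).2
          exact Nat.succ_le_of_lt (Nat.lt_of_not_le h)
        have h2 : BIG.card • (4*k+1) ≤ ∑ i ∈ BIG, s i := card_nsmul_le_sum BIG s _ h1
        have h3 : ∑ i ∈ BIG, s i ≤ ∑ i, s i := sum_le_sum_of_subset (subset_univ _)
        have h4 := (h2.trans h3).trans hsum_s
        simpa using h4
      have hJcard : J.card * k ≤ m := by
        have hJle : J.card ≤ BIG.card + G := by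
          calc J.card ≤ (BIG.map ⟨Sum.inl, Sum.inl_injective⟩).card
              + ((Finset.range G).map ⟨Sum.inr, Sum.inr_injective⟩).card := card_union_le _ _
            _ = BIG.card + G := by rw [card_map, card_map, card_range]
        have ha : BIG.card * k ≤ m/4 := by
          rw [Nat.le_div_iff_mul_le (by norm_num)]
          calc BIG.card * k * 4 = BIG.card * (4*k) := by ring
            _ ≤ BIG.card * (4*k+1) := Nat.mul_le_mul_left _ (Nat.le_succ _)
            _ ≤ m := hBIGcard
        have hb : (m/(4*k)) * k ≤ m/4 := by
          rw [Nat.le_div_iff_mul_le (by norm_num)]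
          calc (m/(4*k)) * k * 4 = (m/(4*k)) * (4*k) := by ring
            _ ≤ m := Nat.div_mul_le_self m (4*k)
        have hc : k ≤ m/2 := by
          rw [Nat.le_div_iff_mul_le (by norm_num)]
          omega
        have hd : m/4 + m/4 + m/2 ≤ m := by omega
        calc J.card * k ≤ (BIG.card + G) * k := Nat.mul_le_mul_right k hJle
          _ = BIG.card * k + (m/(4*k)) * k + k := by rw [hG]; ring
          _ ≤ m/4 + m/4 + m/2 := add_le_add (add_le_add ha hb) hc
          _ ≤ m := hd
      have hJne : J.Nonempty := by
        refine ⟨Sum.inr 0, ?_⟩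
        rw [hJ]
        apply mem_union_right
        exact mem_map_of_mem _ (mem_range.mpr (Nat.succ_pos _))
      -- extract the best allocation
      have hJpos : 0 < J.card := card_pos.mpr hJne
      have hSvnonneg : 0 ≤ ∑ i, v i (A' i) := sum_nonneg (fun i _ => hv0 i _)
      have hconst : ∑ _u ∈ J, ((∑ i, v i (A' i)) / J.card) ≤ ∑ u ∈ J, ∑ j, v j (Ψ u j) := by
        rw [sum_const, nsmul_eq_mul]
        rw [mul_div_cancel₀ _ (by exact_mod_cast hJpos.ne' : (J.card : ℝ) ≠ 0)]
        exact hJsum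
      obtain ⟨u, huJ, hule⟩ := exists_le_of_sum_le hJne hconst
      refine ⟨Ψ u, ?_, ?_⟩
      · rcases u with i | g
        · exact hAbigmem i
        · exact hAgrpmem g
      · have hfrac : (k:ℝ)/m * (∑ i, v i (A' i)) ≤ (∑ i, v i (A' i)) / J.card := by
          have hm0 : (0:ℝ) < m := by positivity
          have hJ0 : (0:ℝ) < J.card := by exact_mod_cast hJpos
          have hkJ : (J.card : ℝ) * k ≤ m := by exact_mod_cast hJcard
          have h1 : (k:ℝ)/m ≤ 1/(J.card:ℝ) := by
            rw [div_le_div_iff₀ hm0 hJ0]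
            nlinarith
          calc (k:ℝ)/m * (∑ i, v i (A' i)) ≤ 1/(J.card:ℝ) * (∑ i, v i (A' i)) :=
              mul_le_mul_of_nonneg_right h1 hSvnonneg
            _ = (∑ i, v i (A' i)) / J.card := by ring
        exact hfrac.trans hule
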